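/- Let S be an object of C and consider a diagram of S-morphisms X →^π X̄ →^{π'} △X with π'∘π = F_{X/S} (the relative F of X over S). If π is an epimorphism, then △π ∘ π' = F_{X̄/S}, i.e., the diagram is a relative S-factorization. -/

import Mathlib

open CategoryTheory CategoryTheory.Limits

universe v u

variable {C : Type u} [Category.{v} C]

/-- The twisted category `tC` attached to a category `C` with an endomorphism `F` of the
identity functor: objects are pairs `(X, Φ)` with `Φ ≫ Φ = F.app X`. -/
structure Twisted (C : Type u) [Category.{v} C] (F : 𝟭 C ⟶ 𝟭 C) where
  X : C
  tw : X ⟶ X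
  tw_tw : tw ≫ tw = F.app X

namespace Twisted

variable {F : 𝟭 C ⟶ 𝟭 C}

instance : Category (Twisted C F) where
  Hom A B := { f : A.X ⟶ B.X // A.tw ≫ f = f ≫ B.tw }
  id A := ⟨𝟙 A.X, by simp⟩
  comp {A B D} f g := ⟨f.1 ≫ g.1, by
    rw [← Category.assoc, f.2, Category.assoc, g.2, ← Category.assoc]⟩
  id_comp f := Subtype.ext (Category.id_comp _)
  comp_id f := Subtype.ext (Category.comp_id _)
  assoc f g h := Subtype.ext (Category.assoc _ _ _)

end Twisted

/-- The mixed category `mC`: objects are quadruples `(X₁, X₂, φ₁, φ₂)` with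
`φ₁ ≫ φ₂ = F.app X₁` and `φ₂ ≫ φ₁ = F.app X₂`. -/
structure Mixed (C : Type u) [Category.{v} C] (F : 𝟭 C ⟶ 𝟭 C) where
  X₁ : C
  X₂ : C
  φ₁ : X₁ ⟶ X₂
  φ₂ : X₂ ⟶ X₁
  h₁ : φ₁ ≫ φ₂ = F.app X₁
  h₂ : φ₂ ≫ φ₁ = F.app X₂

namespace Mixed

variable {F : 𝟭 C ⟶ 𝟭 C}

instance : Category (Mixed C F) where
  Hom A B := { p : (A.X₁ ⟶ B.X₁) × (A.X₂ ⟶ B.X₂) //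
      A.φ₁ ≫ p.2 = p.1 ≫ B.φ₁ ∧ A.φ₂ ≫ p.1 = p.2 ≫ B.φ₂ }
  id A := ⟨(𝟙 _, 𝟙 _), by simp⟩
  comp {A B D} f g := ⟨(f.1.1 ≫ g.1.1, f.1.2 ≫ g.1.2), by
    constructor
    · rw [← Category.assoc, f.2.1, Category.assoc, g.2.1, ← Category.assoc]
    · rw [← Category.assoc, f.2.2, Category.assoc, g.2.2, ← Category.assoc]⟩
  id_comp f := Subtype.ext (Prod.ext_iff.mpr ⟨Category.id_comp _, Category.id_comp _⟩)
  comp_id f := Subtype.ext (Prod.ext_iff.mpr ⟨Category.comp_id _, Category.comp_id _⟩)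
  assoc f g h := Subtype.ext (Prod.ext_iff.mpr ⟨Category.assoc _ _ _, Category.assoc _ _ _⟩)

end Mixed

/-- The first component functor `comp₁ : mC ⥤ C`. -/
def comp₁ (F : 𝟭 C ⟶ 𝟭 C) : Mixed C F ⥤ C where
  obj A := A.X₁
  map f := f.1.1
  map_id _ := rfl
  map_comp _ _ := rfl

/-- The second component functor `comp₂ : mC ⥤ C`. -/
def comp₂ (F : 𝟭 C ⟶ 𝟭 C) : Mixed C F ⥤ C where
  obj A := A.X₂
  map f := f.1.2
  map_id _ := rfl
  map_comp _ _ := rfl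

/-- The mixing functor `m : C ⥤ mC`, `X ↦ (X, X, F_X, id_X)`. -/
def mixM (F : 𝟭 C ⟶ 𝟭 C) : C ⥤ Mixed C F where
  obj X := ⟨X, X, F.app X, 𝟙 X, by simp, by simp⟩
  map {X Y} f := ⟨(f, f), by
    constructor
    · simpa using (F.naturality f).symm
    · simp⟩
  map_id _ := rfl
  map_comp _ _ := rfl

/-- The anti-mixing functor `m̄ : C ⥤ mC`, `X ↦ (X, X, id_X, F_X)`. -/
def mixMbar (F : 𝟭 C ⟶ 𝟭 C) : C ⥤ Mixed C F where
  obj X := ⟨X, X, 𝟙 X, F.app X, by simp, by simp⟩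
  map {X Y} f := ⟨(f, f), by
    constructor
    · simp
    · simpa using (F.naturality f).symm⟩
  map_id _ := rfl
  map_comp _ _ := rfl

/-- The twisting functor `τ* : mC ⥤ mC`, swapping the two halves of a mixed object. -/
def tau (F : 𝟭 C ⟶ 𝟭 C) : Mixed C F ⥤ Mixed C F where
  obj A := ⟨A.X₂, A.X₁, A.φ₂, A.φ₁, A.h₂, A.h₁⟩
  map f := ⟨(f.1.2, f.1.1), ⟨f.2.2, f.2.1⟩⟩
  map_id _ := rfl
  map_comp _ _ := rfl

/-- The twixing functor `δ* : tC ⥤ mC`, `(X, Φ) ↦ (X, X, Φ, Φ)`. -/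
def deltaStar (F : 𝟭 C ⟶ 𝟭 C) : Twisted C F ⥤ Mixed C F where
  obj A := ⟨A.X, A.X, A.tw, A.tw, A.tw_tw, A.tw_tw⟩
  map f := ⟨(f.1, f.1), ⟨f.2, f.2⟩⟩
  map_id _ := rfl
  map_comp _ _ := rfl

/-- Let `q_X : X ⟶ S` and `q_X̄ : X̄ ⟶ S` be `S`-objects, and let
`π : X ⟶ X̄`, `π' : X̄ ⟶ △X` be `S`-morphisms with `π ≫ π' = F_{X/S}`.  If `π` is an
epimorphism, then `π' ≫ △π = F_{X̄/S}`, i.e. the diagram is a relative `S`-factorization. -/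
theorem relFactorization_of_epi {C : Type u} [Category.{v} C] (F : 𝟭 C ⟶ 𝟭 C)
    {S X Xb : C} (qX : X ⟶ S) (qXb : Xb ⟶ S)
    [HasPullback qX (F.app S)] [HasPullback qXb (F.app S)]
    (π : X ⟶ Xb) (π' : Xb ⟶ pullback qX (F.app S))
    (hπ : π ≫ qXb = qX)
    (hπ' : π' ≫ pullback.snd qX (F.app S) = qXb)
    [Epi π]
    (hfac : π ≫ π' = pullback.lift (F.app X) qX (by simpa using (F.naturality qX).symm)) :
    π' ≫ pullback.map qX (F.app S) qXb (F.app S) π (𝟙 S) (𝟙 S)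
        (by simp [hπ]) (by simp)
      = pullback.lift (F.app Xb) qXb (by simpa using (F.naturality qXb).symm) := by
  apply pullback.hom_ext
  · rw [← cancel_epi π]
    simp only [Category.assoc, pullback.lift_fst]
    rw [← Category.assoc, ← Category.assoc, hfac, pullback.lift_fst]
    simpa using (F.naturality π).symm
  · rw [Category.assoc, pullback.lift_snd, pullback.lift_snd]
    exact (congrArg (π' ≫ ·) (Category.comp_id _)).trans hπ'
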